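/- Let U ⊆ ℝⁿ be open and k, l positive integers. If v₁, v₂ : U → ℝ are nonnegative functions with v₁^{1/(2kl)}, v₂^{1/(2kl)} of class C^k on U, then the function (v₁v₂/(v₁+v₂))^{1/l}, defined to be 0 at points where v₁ = v₂ = 0, is of class C^k on U. -/

import Mathlib

open Real Asymptotics

lemma homogZero {F : Type} [NormedAddCommGroup F] [NormedSpace ℝ F]
    {d : ℕ} (hd : 0 < d) {f : ℝ × ℝ → F}
    (hhom : ∀ (t : ℝ) (x : ℝ × ℝ), f (t • x) = t ^ d • f x) : f 0 = 0 := by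
  have := hhom 0 0
  simpa [zero_pow hd.ne'] using this

lemma homogBound {F : Type} [NormedAddCommGroup F] [NormedSpace ℝ F]
    {d : ℕ} (hd : 0 < d) {f : ℝ × ℝ → F}
    (hhom : ∀ (t : ℝ) (x : ℝ × ℝ), f (t • x) = t ^ d • f x)
    (hcont : ContinuousOn f {(0:ℝ×ℝ)}ᶜ) :
    ∃ C : ℝ, 0 ≤ C ∧ ∀ x, ‖f x‖ ≤ C * ‖x‖ ^ d := by
  have hsub : Metric.sphere (0:ℝ×ℝ) 1 ⊆ {(0:ℝ×ℝ)}ᶜ := by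
    intro x hx
    simp only [Metric.mem_sphere, dist_zero_right] at hx
    simp only [Set.mem_compl_iff, Set.mem_singleton_iff]
    intro h; rw [h] at hx; simp at hx
  obtain ⟨C, hC⟩ := (isCompact_sphere (0:ℝ×ℝ) 1).exists_bound_of_continuousOn
    (hcont.mono hsub)
  refine ⟨max C 0, le_max_right _ _, fun x => ?_⟩
  by_cases hx : x = 0
  · simp [hx, homogZero hd hhom, zero_pow hd.ne']
  · have hxn : (0:ℝ) < ‖x‖ := norm_pos_iff.2 hx
    set u : ℝ × ℝ := ‖x‖⁻¹ • x with hu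
    have hun : ‖u‖ = 1 := by
      rw [hu, norm_smul, norm_inv, norm_norm, inv_mul_cancel₀ hxn.ne']
    have hxu : x = ‖x‖ • u := by
      rw [hu, smul_smul, mul_inv_cancel₀ hxn.ne', one_smul]
    have he := hhom ‖x‖ u
    rw [← hxu] at he
    have : ‖f x‖ = ‖x‖ ^ d * ‖f u‖ := by
      rw [he, norm_smul, norm_pow, norm_norm]
    rw [this, mul_comm]
    have hfu : ‖f u‖ ≤ max C 0 := le_trans (hC u (by simp [hun])) (le_max_left _ _)
    exact mul_le_mul hfu le_rfl (pow_nonneg (norm_nonneg x) d) (le_max_right _ _)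

-- Homogeneous of degree d, smooth off 0 ⇒ C^m for m < d
theorem homogAux : ∀ (m : ℕ) {F : Type} [NormedAddCommGroup F] [NormedSpace ℝ F]
    (d : ℕ) (f : ℝ × ℝ → F), m < d → (∀ (t : ℝ) (x : ℝ × ℝ), f (t • x) = t ^ d • f x) →
    ContDiffOn ℝ (⊤:ℕ∞) f {(0:ℝ×ℝ)}ᶜ → ContDiff ℝ m f := by
  intro m
  induction m with
  | zero =>
    intro F _ _ d f hmd hhom hsm
    rw [show ((0:ℕ) : WithTop ℕ∞) = 0 from rfl, contDiff_zero]
    obtain ⟨C, hC0, hC⟩ := homogBound hmd hhom hsm.continuousOn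
    rw [continuous_iff_continuousAt]
    intro x
    by_cases hx : x = 0
    · subst hx
      have h0 : f 0 = 0 := homogZero hmd hhom
      rw [ContinuousAt, h0]
      apply squeeze_zero_norm hC
      have : Filter.Tendsto (fun x : ℝ×ℝ => C * ‖x‖ ^ d) (nhds 0) (nhds (C * ‖(0:ℝ×ℝ)‖ ^ d)) :=
        (continuous_const.mul (continuous_norm.pow d)).continuousAt
      simpa [zero_pow hmd.ne'] using this
    · exact (hsm.continuousOn.continuousAt (compl_singleton_mem_nhds hx))
  | succ m ih =>
    intro F _ _ d f hmd hhom hsm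
    have hd2 : 2 ≤ d := by omega
    have hd1 : 0 < d := by omega
    obtain ⟨C, hC0, hC⟩ := homogBound hd1 hhom hsm.continuousOn
    have h0 : f 0 = 0 := homogZero hd1 hhom
    -- differentiability at 0 with derivative 0
    have hder0 : HasFDerivAt f (0 : (ℝ×ℝ) →L[ℝ] F) 0 := by
      rw [hasFDerivAt_iff_isLittleO_nhds_zero]
      simp only [zero_add, h0, sub_zero, ContinuousLinearMap.zero_apply]
      have h1 : f =O[nhds 0] fun x : ℝ×ℝ => ‖x‖ ^ d :=
        isBigO_of_le' _ (fun x => by simpa using hC x)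
      exact h1.trans_isLittleO (isLittleO_norm_pow_id hd2)
    have hdiff : Differentiable ℝ f := by
      intro x
      by_cases hx : x = 0
      · subst hx; exact hder0.differentiableAt
      · exact (hsm.differentiableOn (by simp) x hx).differentiableAt
          (compl_singleton_mem_nhds hx)
    -- homogeneity of the derivative
    have hg0 : fderiv ℝ f 0 = 0 := hder0.fderiv
    have hghom : ∀ (t : ℝ) (x : ℝ×ℝ), fderiv ℝ f (t • x) = t ^ (d-1) • fderiv ℝ f x := by
      intro t x
      rcases eq_or_ne t 0 with ht | ht
      · subst ht
        simp [zero_smul, hg0, zero_pow (show d-1 ≠ 0 by omega)]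
      · have heq : (fun y : ℝ×ℝ => f (t • y)) = fun y => t ^ d • f y :=
          funext fun y => hhom t y
        have hinner : HasFDerivAt (fun y : ℝ×ℝ => t • y)
            (t • ContinuousLinearMap.id ℝ (ℝ×ℝ)) x := (hasFDerivAt_id x).const_smul t
        have h1 : HasFDerivAt (fun y : ℝ×ℝ => f (t • y))
            ((fderiv ℝ f (t • x)).comp (t • ContinuousLinearMap.id ℝ (ℝ×ℝ))) x :=
          ((hdiff (t • x)).hasFDerivAt).comp x hinner
        have h2 : HasFDerivAt (fun y : ℝ×ℝ => t ^ d • f y) (t ^ d • fderiv ℝ f x) x :=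
          ((hdiff x).hasFDerivAt).const_smul (t ^ d)
        rw [heq] at h1
        have hEq := h1.unique h2
        refine ContinuousLinearMap.ext fun v => ?_
        have := congrArg (fun L : (ℝ×ℝ) →L[ℝ] F => L v) hEq
        simp only [ContinuousLinearMap.comp_apply, ContinuousLinearMap.smul_apply,
          ContinuousLinearMap.id_apply, map_smul] at this ⊢
        have hc : t ^ d = t * t ^ (d - 1) := by
          rw [← pow_succ']
          congr 1
          omega
        rw [hc, mul_smul] at this
        exact smul_right_injective F ht this
    -- derivative is smooth off 0
    have hgsm : ContDiffOn ℝ (⊤:ℕ∞) (fderiv ℝ f) {(0:ℝ×ℝ)}ᶜ := by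
      exact hsm.fderiv_of_isOpen isOpen_compl_singleton (by exact_mod_cast le_top)
    have hcd : ContDiff ℝ m (fderiv ℝ f) := ih (d-1) (fderiv ℝ f) (by omega) hghom hgsm
    have hcast : ((m+1 : ℕ) : WithTop ℕ∞) = (m : WithTop ℕ∞) + 1 := by push_cast; rfl
    rw [hcast, contDiff_succ_iff_fderiv]
    refine ⟨hdiff, ?_, hcd⟩
    intro hω
    exact absurd hω (by simp [WithTop.natCast_ne_top])

noncomputable def psiFn (k l : ℕ) : ℝ × ℝ → ℝ :=
  fun p => p.1 ^ (2*k) * p.2 ^ (2*k) / (p.1 ^ (2*k*l) + p.2 ^ (2*k*l)) ^ ((1:ℝ)/l)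

lemma psiFn_homog (k l : ℕ) (hk : 0 < k) (hl : 0 < l) :
    ∀ (t : ℝ) (x : ℝ × ℝ), psiFn k l (t • x) = t ^ (2*k) • psiFn k l x := by
  intro t x
  obtain ⟨a, b⟩ := x
  simp only [psiFn, Prod.smul_mk, smul_eq_mul]
  rcases eq_or_ne t 0 with ht | ht
  · simp [ht, zero_pow (by omega : 2*k ≠ 0)]
  · have hnum : (t*a) ^ (2*k) * (t*b) ^ (2*k) = t ^ (2*k) * (t ^ (2*k) * (a ^ (2*k) * b ^ (2*k))) := by
      rw [mul_pow, mul_pow]; ring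
    have hbase : (t*a) ^ (2*k*l) + (t*b) ^ (2*k*l) = t ^ (2*k*l) * (a ^ (2*k*l) + b ^ (2*k*l)) := by
      rw [mul_pow, mul_pow]; ring
    have hsq : ∀ c : ℝ, (0:ℝ) ≤ c ^ (2*k*l) := by
      intro c
      rw [show 2*k*l = (k*l)*2 by ring, pow_mul]
      positivity
    have htp : (0:ℝ) ≤ t ^ (2*k*l) := hsq t
    have hS : (0:ℝ) ≤ a ^ (2*k*l) + b ^ (2*k*l) := add_nonneg (hsq a) (hsq b)
    have hden : ((t*a) ^ (2*k*l) + (t*b) ^ (2*k*l)) ^ ((1:ℝ)/l)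
        = t ^ (2*k) * (a ^ (2*k*l) + b ^ (2*k*l)) ^ ((1:ℝ)/l) := by
      rw [hbase, Real.mul_rpow htp hS]
      congr 1
      have h1 : t ^ (2*k*l) = (t^2) ^ (k*l) := by rw [← pow_mul]; ring_nf
      rw [h1, ← Real.rpow_natCast (t^2) (k*l), ← Real.rpow_mul (sq_nonneg t)]
      have h2 : ((k*l : ℕ) : ℝ) * ((1:ℝ)/l) = (k:ℝ) := by
        have : (l:ℝ) ≠ 0 := Nat.cast_ne_zero.2 hl.ne'
        push_cast; field_simp
      rw [h2, Real.rpow_natCast, ← pow_mul]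
    rw [hnum, hden, mul_div_assoc]
    congr 1
    rw [mul_div_mul_left _ _ (pow_ne_zero _ ht)]

lemma psiFn_smooth (k l : ℕ) (hk : 0 < k) (hl : 0 < l) :
    ContDiffOn ℝ (⊤:ℕ∞) (psiFn k l) {(0:ℝ×ℝ)}ᶜ := by
  intro p hp
  apply ContDiffAt.contDiffWithinAt
  have hne : p.1 ≠ 0 ∨ p.2 ≠ 0 := by
    by_contra h
    push_neg at h
    exact hp (Prod.ext h.1 h.2)
  have hsq : ∀ c : ℝ, (0:ℝ) ≤ c ^ (2*k*l) := by
    intro c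
    rw [show 2*k*l = (k*l)*2 by ring, pow_mul]
    positivity
  have hS : (0:ℝ) < p.1 ^ (2*k*l) + p.2 ^ (2*k*l) := by
    rcases hne with h | h
    · have h1 : (0:ℝ) < p.1 ^ (2*k*l) :=
        lt_of_le_of_ne (hsq _) (Ne.symm (pow_ne_zero _ h))
      linarith [hsq p.2]
    · have h1 : (0:ℝ) < p.2 ^ (2*k*l) :=
        lt_of_le_of_ne (hsq _) (Ne.symm (pow_ne_zero _ h))
      linarith [hsq p.1]
  have hnum : ContDiffAt ℝ (⊤:ℕ∞) (fun p : ℝ×ℝ => p.1 ^ (2*k) * p.2 ^ (2*k)) p :=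
    ((contDiff_fst.pow _).mul (contDiff_snd.pow _)).contDiffAt
  have hbase : ContDiffAt ℝ (⊤:ℕ∞) (fun p : ℝ×ℝ => p.1 ^ (2*k*l) + p.2 ^ (2*k*l)) p :=
    ((contDiff_fst.pow _).add (contDiff_snd.pow _)).contDiffAt
  have hrpow : ContDiffAt ℝ (⊤:ℕ∞) (fun s : ℝ => s ^ ((1:ℝ)/l))
      (p.1 ^ (2*k*l) + p.2 ^ (2*k*l)) :=
    Real.contDiffAt_rpow_const_of_ne hS.ne'
  have hden : ContDiffAt ℝ (⊤:ℕ∞)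
      (fun p : ℝ×ℝ => (p.1 ^ (2*k*l) + p.2 ^ (2*k*l)) ^ ((1:ℝ)/l)) p :=
    by have := hrpow.comp p hbase; exact this
  exact hnum.div hden (Real.rpow_pos_of_pos hS _).ne'

lemma psiFn_contDiff (k l : ℕ) (hk : 0 < k) (hl : 0 < l) :
    ContDiff ℝ k (psiFn k l) :=
  homogAux k (2*k) (psiFn k l) (by omega) (psiFn_homog k l hk hl) (psiFn_smooth k l hk hl)

theorem stmt_8 (n k l : ℕ) (hk : 0 < k) (hl : 0 < l)
    (U : Set (Fin n → ℝ)) (hU : IsOpen U)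
    (v₁ v₂ : (Fin n → ℝ) → ℝ)
    (h₁ : ∀ x ∈ U, 0 ≤ v₁ x) (h₂ : ∀ x ∈ U, 0 ≤ v₂ x)
    (hv₁ : ContDiffOn ℝ k (fun x => (v₁ x) ^ ((1 : ℝ) / (2 * k * l))) U)
    (hv₂ : ContDiffOn ℝ k (fun x => (v₂ x) ^ ((1 : ℝ) / (2 * k * l))) U) :
    ContDiffOn ℝ k
      (fun x => (v₁ x * v₂ x / (v₁ x + v₂ x)) ^ ((1 : ℝ) / l)) U := by
  have hk' : (k:ℝ) ≠ 0 := Nat.cast_ne_zero.2 hk.ne'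
  have hl' : (l:ℝ) ≠ 0 := Nat.cast_ne_zero.2 hl.ne'
  set e : ℝ := (1 : ℝ) / (2 * k * l) with he
  have hcomp : ContDiffOn ℝ k
      (fun x => psiFn k l (v₁ x ^ e, v₂ x ^ e)) U :=
    (psiFn_contDiff k l hk hl).comp_contDiffOn (hv₁.prodMk hv₂)
  refine hcomp.congr fun x hx => ?_
  have hA : (0:ℝ) ≤ v₁ x := h₁ x hx
  have hB : (0:ℝ) ≤ v₂ x := h₂ x hx
  have key : ∀ (A : ℝ), 0 ≤ A →
      (A ^ e) ^ (2*k*l) = A ∧ (A ^ e) ^ (2*k) = A ^ ((1:ℝ)/l) := by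
    intro A hA0
    constructor
    · rw [← Real.rpow_natCast (A ^ e) (2*k*l), ← Real.rpow_mul hA0]
      have : e * ((2*k*l : ℕ) : ℝ) = 1 := by
        rw [he]; push_cast; field_simp
      rw [this, Real.rpow_one]
    · rw [← Real.rpow_natCast (A ^ e) (2*k), ← Real.rpow_mul hA0]
      congr 1
      rw [he]; push_cast; field_simp
  obtain ⟨hA1, hA2⟩ := key (v₁ x) hA
  obtain ⟨hB1, hB2⟩ := key (v₂ x) hB
  simp only [psiFn]
  rw [hA1, hA2, hB1, hB2,
    Real.div_rpow (mul_nonneg hA hB) (add_nonneg hA hB),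
    Real.mul_rpow hA hB]
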